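/- Let E and F be wavelet sets, and let σ = σ_E^F : ℝ → ℝ be the 2-homogeneous extension (σ(2ⁿs) = 2ⁿσ(s), σ(0)=0) of the 2π-translation congruence from E to F. Then σ is a measure-preserving bijection of ℝ onto ℝ. -/

import Mathlib

open MeasureTheory Set Real

private lemma image_mul_eq_preimage' {c : ℝ} (hc : c ≠ 0) (S : Set ℝ) :
    (fun s => c * s) '' S = (fun x => c⁻¹ * x) ⁻¹' S := by
  ext x
  constructor
  · rintro ⟨s, hs, rfl⟩
    simpa [inv_mul_cancel_left₀ hc] using hs
  · intro h
    exact ⟨c⁻¹ * x, h, mul_inv_cancel_left₀ hc x⟩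

private lemma vol_image_mul' {c : ℝ} (hc : c ≠ 0) (S : Set ℝ) :
    volume ((fun s => c * s) '' S) = ENNReal.ofReal |c| * volume S := by
  rw [image_mul_eq_preimage' hc, Real.volume_preimage_mul_left (inv_ne_zero hc), inv_inv]

private lemma transl_congr_measure (E F : Set ℝ) (hE : MeasurableSet E)
    (σ : ℝ → ℝ) (hσmeas : Measurable σ) (hbij : Set.BijOn σ E F)
    (htc : ∀ s ∈ E, ∃ k : ℤ, σ s = s + 2 * π * k)
    (B : Set ℝ) (hB : MeasurableSet B) :
    volume (E ∩ σ ⁻¹' B) = volume (F ∩ B) := by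
  classical
  set Ek : ℤ → Set ℝ := fun k => E ∩ {s | σ s = s + 2 * π * k} with hEkdef
  have hπ : (2 : ℝ) * π ≠ 0 := by positivity
  have hEkmeas : ∀ k, MeasurableSet (Ek k) := fun k =>
    hE.inter (measurableSet_eq_fun hσmeas (measurable_id.add_const _))
  have hcover : E = ⋃ k, Ek k := by
    ext s
    simp only [mem_iUnion, hEkdef, mem_inter_iff, mem_setOf_eq]
    constructor
    · intro hs
      obtain ⟨k, hk⟩ := htc s hs
      exact ⟨k, hs, hk⟩
    · rintro ⟨k, hs, -⟩
      exact hs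
  have hEkdisj : Pairwise (Function.onFun Disjoint Ek) := by
    intro k l hkl
    rw [Function.onFun, Set.disjoint_left]
    rintro s ⟨-, h1⟩ ⟨-, h2⟩
    apply hkl
    have : (2 : ℝ) * π * k = 2 * π * l := by
      have := h1.symm.trans h2
      linarith [add_right_cancel ((add_comm (2*π*(k:ℝ)) s) ▸ (add_comm (2*π*(l:ℝ)) s) ▸ this)]
    exact_mod_cast mul_left_cancel₀ hπ this
  set Fk : ℤ → Set ℝ := fun k => (fun x => x + 2 * π * k) '' Ek k with hFkdef
  have hFkσ : ∀ k, Fk k = σ '' Ek k := by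
    intro k
    exact (Set.image_congr (fun s hs => hs.2)).symm
  have hFkmeas : ∀ k, MeasurableSet (Fk k) := by
    intro k
    have : Fk k = (fun x => x + -(2 * π * k)) ⁻¹' Ek k := by
      ext x
      simp [hFkdef, mem_image]
    rw [this]
    exact (hEkmeas k).preimage (measurable_id.add_const _)
  have hFcover : (⋃ k, Fk k) = F := by
    have : (⋃ k, Fk k) = σ '' E := by
      rw [hcover, image_iUnion]
      exact iUnion_congr hFkσ
    rw [this, hbij.image_eq]
  have hFkdisj : Pairwise (Function.onFun Disjoint Fk) := by
    intro k l hkl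
    rw [Function.onFun, hFkσ, hFkσ, Set.disjoint_left]
    rintro x ⟨a, ha, rfl⟩ ⟨b, hb, hba⟩
    have hab : b = a := hbij.injOn hb.1 ha.1 hba
    subst hab
    exact (Set.disjoint_left.1 (hEkdisj hkl)) ha hb
  have h1 : ∀ k, Ek k ∩ σ ⁻¹' B = (fun x => x + 2 * π * k) ⁻¹' (Fk k ∩ B) := by
    intro k
    ext s
    simp only [hFkdef, mem_inter_iff, mem_preimage, mem_image]
    constructor
    · rintro ⟨⟨hsE, hk⟩, hsB⟩
      exact ⟨⟨s, ⟨hsE, hk⟩, rfl⟩, by rw [← hk]; exact hsB⟩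
    · rintro ⟨⟨t, htk, hts⟩, hB'⟩
      have hts' : t = s := add_right_cancel hts
      subst hts'
      exact ⟨htk, by rw [htk.2]; exact hB'⟩
  calc volume (E ∩ σ ⁻¹' B) = volume (⋃ k, Ek k ∩ σ ⁻¹' B) := by
        rw [hcover, iUnion_inter]
    _ = ∑' k, volume (Ek k ∩ σ ⁻¹' B) := by
        refine measure_iUnion ?_ fun k => (hEkmeas k).inter (hσmeas hB)
        exact hEkdisj.mono fun k l h => h.mono inter_subset_left inter_subset_left
    _ = ∑' k, volume (Fk k ∩ B) := by
        refine tsum_congr fun k => ?_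
        rw [h1 k, measure_preimage_add_right]
    _ = volume (⋃ k, Fk k ∩ B) := by
        refine (measure_iUnion ?_ fun k => (hFkmeas k).inter hB).symm
        exact hFkdisj.mono fun k l h => h.mono inter_subset_left inter_subset_left
    _ = volume (F ∩ B) := by rw [← iUnion_inter, hFcover]

/-- Let `E` and `F` be wavelet sets (each a `2`-dilation generator of a partition of `ℝ∖{0}`),
and let `σ : ℝ → ℝ` be the `2`-homogeneous extension (`σ(2ⁿs) = 2ⁿσ(s)`, `σ(0) = 0`) of the
`2π`-translation congruence `E → F`.  Then `σ` is a measure-preserving bijection of `ℝ`. -/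
theorem stmt_17 (E F : Set ℝ) (hE : MeasurableSet E) (hF : MeasurableSet F)
    (hEdisj : ∀ m n : ℤ, m ≠ n →
        Disjoint ((fun s => (2 : ℝ) ^ m * s) '' E) ((fun s => (2 : ℝ) ^ n * s) '' E))
    (hEuniv : (⋃ n : ℤ, (fun s => (2 : ℝ) ^ n * s) '' E) = {(0 : ℝ)}ᶜ)
    (hFdisj : ∀ m n : ℤ, m ≠ n →
        Disjoint ((fun s => (2 : ℝ) ^ m * s) '' F) ((fun s => (2 : ℝ) ^ n * s) '' F))
    (hFuniv : (⋃ n : ℤ, (fun s => (2 : ℝ) ^ n * s) '' F) = {(0 : ℝ)}ᶜ)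
    (σ : ℝ → ℝ) (hσmeas : Measurable σ) (hσ0 : σ 0 = 0)
    (hhom : ∀ (n : ℤ) (s : ℝ), σ ((2 : ℝ) ^ n * s) = (2 : ℝ) ^ n * σ s)
    (hbij : Set.BijOn σ E F)
    (htc : ∀ s ∈ E, ∃ k : ℤ, σ s = s + 2 * π * k) :
    Function.Bijective σ ∧ MeasurePreserving σ volume volume := by
  have hc : ∀ n : ℤ, ((2 : ℝ) ^ n) ≠ 0 := fun n => zpow_ne_zero n two_ne_zero
  have hF0 : (0 : ℝ) ∉ F := by
    intro h
    have h1 : (0 : ℝ) ∈ ⋃ n : ℤ, (fun s => (2 : ℝ) ^ n * s) '' F :=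
      mem_iUnion.2 ⟨0, ⟨0, h, by norm_num⟩⟩
    rw [hFuniv] at h1
    exact h1 rfl
  have decompE : ∀ x : ℝ, x ≠ 0 → ∃ n : ℤ, ∃ s ∈ E, x = (2 : ℝ) ^ n * s := by
    intro x hx
    have : x ∈ ⋃ n : ℤ, (fun s => (2 : ℝ) ^ n * s) '' E := by rw [hEuniv]; exact hx
    obtain ⟨n, s, hs, hxs⟩ := mem_iUnion.1 this
    exact ⟨n, s, hs, hxs.symm⟩
  have decompF : ∀ x : ℝ, x ≠ 0 → ∃ n : ℤ, ∃ s ∈ F, x = (2 : ℝ) ^ n * s := by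
    intro x hx
    have : x ∈ ⋃ n : ℤ, (fun s => (2 : ℝ) ^ n * s) '' F := by rw [hFuniv]; exact hx
    obtain ⟨n, s, hs, hxs⟩ := mem_iUnion.1 this
    exact ⟨n, s, hs, hxs.symm⟩
  have hσE0 : ∀ x : ℝ, x ≠ 0 → σ x ≠ 0 := by
    intro x hx h0
    obtain ⟨n, s, hs, rfl⟩ := decompE x hx
    rw [hhom] at h0
    have : σ s = 0 := by
      rcases mul_eq_zero.1 h0 with h | h
      · exact absurd h (hc n)
      · exact h
    exact hF0 (this ▸ hbij.mapsTo hs)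
  have hinj : Function.Injective σ := by
    intro x y hxy
    by_cases hx : x = 0
    · by_cases hy : y = 0
      · rw [hx, hy]
      · exact absurd (hxy.symm.trans (hx ▸ hσ0)) (hσE0 y hy)
    · by_cases hy : y = 0
      · exact absurd (hxy.trans (hy ▸ hσ0)) (hσE0 x hx)
      · obtain ⟨m, s, hs, rfl⟩ := decompE x hx
        obtain ⟨n, t, ht, rfl⟩ := decompE y hy
        have hσs : σ s ∈ F := hbij.mapsTo hs
        have hσt : σ t ∈ F := hbij.mapsTo ht
        have hmem1 : σ ((2 : ℝ) ^ m * s) ∈ (fun s => (2 : ℝ) ^ m * s) '' F := by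
          rw [hhom]; exact ⟨σ s, hσs, rfl⟩
        have hmem2 : σ ((2 : ℝ) ^ m * s) ∈ (fun s => (2 : ℝ) ^ n * s) '' F := by
          rw [hxy, hhom]; exact ⟨σ t, hσt, rfl⟩
        have hmn : m = n := by
          by_contra h
          exact Set.disjoint_left.1 (hFdisj m n h) hmem1 hmem2
        subst hmn
        have h1 : (2 : ℝ) ^ m * σ s = (2 : ℝ) ^ m * σ t := by
          rw [← hhom, ← hhom, hxy]
        have h2 : σ s = σ t := mul_left_cancel₀ (hc m) h1
        rw [hbij.injOn hs ht h2]
  have hsurj : Function.Surjective σ := by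
    intro y
    by_cases hy : y = 0
    · exact ⟨0, by rw [hσ0, hy]⟩
    · obtain ⟨n, f, hf, rfl⟩ := decompF y hy
      obtain ⟨s, hs, hsf⟩ := hbij.surjOn hf
      exact ⟨(2 : ℝ) ^ n * s, by rw [hhom, hsf]⟩
  refine ⟨⟨hinj, hsurj⟩, hσmeas, ?_⟩
  refine Measure.ext fun A hA => ?_
  rw [Measure.map_apply hσmeas hA]
  have key : ∀ S : Set ℝ, volume S = volume (S ∩ {(0 : ℝ)}ᶜ) := fun S =>
    (measure_inter_conull (by simp)).symm
  rw [key (σ ⁻¹' A), key A]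
  have hEim : ∀ n : ℤ, MeasurableSet ((fun s => (2 : ℝ) ^ n * s) '' E) := fun n => by
    rw [image_mul_eq_preimage' (hc n)]
    exact hE.preimage (measurable_const_mul _)
  have hFim : ∀ n : ℤ, MeasurableSet ((fun s => (2 : ℝ) ^ n * s) '' F) := fun n => by
    rw [image_mul_eq_preimage' (hc n)]
    exact hF.preimage (measurable_const_mul _)
  have hEcov : σ ⁻¹' A ∩ {(0 : ℝ)}ᶜ
      = ⋃ n : ℤ, σ ⁻¹' A ∩ ((fun s => (2 : ℝ) ^ n * s) '' E) := by
    rw [← hEuniv, inter_iUnion]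
  have hFcov : A ∩ {(0 : ℝ)}ᶜ = ⋃ n : ℤ, A ∩ ((fun s => (2 : ℝ) ^ n * s) '' F) := by
    rw [← hFuniv, inter_iUnion]
  rw [hEcov, hFcov]
  rw [measure_iUnion
    (fun m n hmn => (hEdisj m n hmn).mono inter_subset_right inter_subset_right)
    (fun n => (hσmeas hA).inter (hEim n))]
  rw [measure_iUnion
    (fun m n hmn => (hFdisj m n hmn).mono inter_subset_right inter_subset_right)
    (fun n => hA.inter (hFim n))]
  refine tsum_congr fun n => ?_
  have hBmeas : MeasurableSet ((fun x => (2 : ℝ) ^ n * x) ⁻¹' A) :=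
    hA.preimage (measurable_const_mul _)
  have heq1 : σ ⁻¹' A ∩ ((fun s => (2 : ℝ) ^ n * s) '' E)
      = (fun s => (2 : ℝ) ^ n * s) '' (E ∩ σ ⁻¹' ((fun x => (2 : ℝ) ^ n * x) ⁻¹' A)) := by
    ext x
    constructor
    · rintro ⟨hxA, s, hs, rfl⟩
      refine ⟨s, ⟨hs, ?_⟩, rfl⟩
      simpa [← hhom n s] using hxA
    · rintro ⟨s, ⟨hsE, hsB⟩, rfl⟩
      exact ⟨by simpa [hhom n s] using hsB, s, hsE, rfl⟩
  have heq2 : A ∩ ((fun s => (2 : ℝ) ^ n * s) '' F)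
      = (fun s => (2 : ℝ) ^ n * s) '' (F ∩ ((fun x => (2 : ℝ) ^ n * x) ⁻¹' A)) := by
    rw [Set.image_inter (mul_right_injective₀ (hc n)),
      Set.image_preimage_eq _ (mul_left_surjective₀ (hc n)), inter_comm]
  rw [heq1, heq2, vol_image_mul' (hc n), vol_image_mul' (hc n),
    transl_congr_measure E F hE σ hσmeas hbij htc _ hBmeas]
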